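/- arXiv:1903.06642 — 5 statements merged into one kernel-verified Lean document; each statement's English description precedes it below -/
import Mathlib

section
/- Let n ∈ ℕ, let f_0, ..., f_n : ℝ → ℝ be differentiable at x ∈ ℝ, set K = Σ f_k(x)², K01 = Σ f_k(x)f_k'(x), K11 = Σ f_k'(x)², and assume K > 0 and K·K11 − K01² > 0. Let η_0, ..., η_n be real random variables on a probability space, define g = Σ_{k=0}^n μ_k η_k and h = Σ_{k=0}^n λ_k η_k with μ_k = f_k(x)/√K and λ_k = (K f_k'(x) − K01 f_k(x))/√(K(K11·K − K01²)), and define P = Σ_{k=0}^n η_k f_k(x) and P' = Σ_{k=0}^n η_k f_k'(x). If D̂ : ℝ² → ℝ≥0 is a probability density of the random vector (g, h) with respect to Lebesgue measure on ℝ², then the function D(ξ, η) = (K·K11 − K01²)^{−1/2} · D̂( ξ/√K , (K·η − K01·ξ)/√(K(K·K11 − K01²)) ) is a probability density of the random vector (P, P') with respect to Lebesgue measure on ℝ². -/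
open Finset MeasureTheory ENNReal

lemma map_withDensity_equiv {α β : Type*} [MeasurableSpace α] [MeasurableSpace β]
    (e : α ≃ᵐ β) (μ : Measure α) (f : β → ℝ≥0∞) (hf : Measurable f) :
    Measure.map e (μ.withDensity (fun a => f (e a))) = (Measure.map e μ).withDensity f := by
  ext s hs
  rw [Measure.map_apply e.measurable hs, withDensity_apply _ (e.measurable hs),
    withDensity_apply _ hs, Measure.restrict_map e.measurable hs,
    lintegral_map hf e.measurable]

theorem stmt_1 (n : ℕ) (f : ℕ → ℝ → ℝ) (x : ℝ)
    (hf : ∀ k ≤ n, DifferentiableAt ℝ (f k) x)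
    (K K01 K11 : ℝ)
    (hK : K = ∑ k ∈ Finset.range (n + 1), (f k x) ^ 2)
    (hK01 : K01 = ∑ k ∈ Finset.range (n + 1), f k x * deriv (f k) x)
    (hK11 : K11 = ∑ k ∈ Finset.range (n + 1), (deriv (f k) x) ^ 2)
    (hKpos : 0 < K) (hpos : 0 < K * K11 - K01 ^ 2)
    (μ lam : ℕ → ℝ)
    (hμ : ∀ k, μ k = f k x / Real.sqrt K)
    (hlam : ∀ k, lam k =
      (K * deriv (f k) x - K01 * f k x) / Real.sqrt (K * (K11 * K - K01 ^ 2)))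
    (Ω : Type*) [MeasureSpace Ω] (ℙ : Measure Ω) [IsProbabilityMeasure ℙ]
    (η : ℕ → Ω → ℝ) (hηmeas : ∀ k, Measurable (η k))
    (g h : Ω → ℝ)
    (hg : g = fun ω => ∑ k ∈ Finset.range (n + 1), μ k * η k ω)
    (hh : h = fun ω => ∑ k ∈ Finset.range (n + 1), lam k * η k ω)
    (P P' : Ω → ℝ)
    (hP : P = fun ω => ∑ k ∈ Finset.range (n + 1), η k ω * f k x)
    (hP' : P' = fun ω => ∑ k ∈ Finset.range (n + 1), η k ω * deriv (f k) x)
    (Dh : ℝ × ℝ → ℝ) (hDhmeas : Measurable Dh) (hDhnonneg : ∀ p, 0 ≤ Dh p)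
    (hdens : Measure.map (fun ω => (g ω, h ω)) ℙ =
      volume.withDensity (fun p => ENNReal.ofReal (Dh p))) :
    Measure.map (fun ω => (P ω, P' ω)) ℙ =
      volume.withDensity (fun p => ENNReal.ofReal
        ((K * K11 - K01 ^ 2) ^ (-(1 : ℝ) / 2) *
          Dh (p.1 / Real.sqrt K,
             (K * p.2 - K01 * p.1) / Real.sqrt (K * (K * K11 - K01 ^ 2))))) := by
  have hKne : K ≠ 0 := hKpos.ne'
  have hprod : 0 < K * (K * K11 - K01 ^ 2) := mul_pos hKpos hpos
  set a := Real.sqrt K with ha_def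
  have ha : 0 < a := Real.sqrt_pos.mpr hKpos
  have haa : a * a = K := Real.mul_self_sqrt hKpos.le
  set s := Real.sqrt (K * (K * K11 - K01 ^ 2)) with hs_def
  have hs : 0 < s := Real.sqrt_pos.mpr hprod
  have hs' : Real.sqrt (K * (K11 * K - K01 ^ 2)) = s := by
    rw [hs_def]; congr 1; ring
  have hsa : s = a * Real.sqrt (K * K11 - K01 ^ 2) := by
    rw [hs_def, ha_def, Real.sqrt_mul hKpos.le]
  -- the forward linear map T and its inverse S
  set T : (ℝ × ℝ) →ₗ[ℝ] (ℝ × ℝ) :=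
    Matrix.toLin (Module.Basis.finTwoProd ℝ) (Module.Basis.finTwoProd ℝ) !![a, 0; K01 * a / K, s / K]
    with hT_def
  set S : (ℝ × ℝ) →ₗ[ℝ] (ℝ × ℝ) :=
    Matrix.toLin (Module.Basis.finTwoProd ℝ) (Module.Basis.finTwoProd ℝ) !![1 / a, 0; -K01 / s, K / s]
    with hS_def
  have hTapp : ∀ q : ℝ × ℝ, T q = (a * q.1, K01 * a / K * q.1 + s / K * q.2) := by
    intro q; rw [hT_def, Matrix.toLin_finTwoProd_apply]; simp
  have hSapp : ∀ q : ℝ × ℝ, S q = (q.1 / a, (-K01) / s * q.1 + K / s * q.2) := by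
    intro q; rw [hS_def, Matrix.toLin_finTwoProd_apply]; simp [div_eq_mul_inv]; ring_nf
  have hST : S.comp T = LinearMap.id := by
    apply LinearMap.ext
    intro q
    rw [LinearMap.comp_apply, hTapp, hSapp, LinearMap.id_apply]
    apply Prod.ext
    · simp only []
      field_simp
    · simp only []
      field_simp
      ring
  have hTS : T.comp S = LinearMap.id := by
    apply LinearMap.ext
    intro q
    rw [LinearMap.comp_apply, hSapp, hTapp, LinearMap.id_apply]
    apply Prod.ext
    · simp only []
      field_simp
    · simp only []
      field_simp
      ring
  have hdet : LinearMap.det T = Real.sqrt (K * K11 - K01 ^ 2) := by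
    rw [hT_def, LinearMap.det_toLin, Matrix.det_fin_two_of, hsa]
    field_simp
    nlinarith [haa]
  have hdetpos : 0 < LinearMap.det T := by
    rw [hdet]; exact Real.sqrt_pos.mpr hpos
  -- the measurable equiv
  let eL : (ℝ × ℝ) ≃ₗ[ℝ] (ℝ × ℝ) := LinearEquiv.ofLinear T S hTS hST
  let e : (ℝ × ℝ) ≃ᵐ (ℝ × ℝ) :=
    eL.toContinuousLinearEquiv.toHomeomorph.toMeasurableEquiv
  have hecoe : ⇑e = ⇑T := rfl
  have hesymm : ⇑e.symm = ⇑S := rfl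
  -- measurability of (g, h)
  have hgmeas : Measurable g := by
    rw [hg]; exact Finset.measurable_sum _ fun k _ => (hηmeas k).const_mul _
  have hhmeas : Measurable h := by
    rw [hh]; exact Finset.measurable_sum _ fun k _ => (hηmeas k).const_mul _
  have hghmeas : Measurable fun ω => (g ω, h ω) := hgmeas.prodMk hhmeas
  -- (P, P') = e ∘ (g, h)
  have hgP : ∀ ω, a * g ω = P ω := by
    intro ω
    rw [hg, hP, Finset.mul_sum]
    refine Finset.sum_congr rfl fun k _ => ?_
    rw [hμ]
    field_simp
  have hhP : ∀ ω, K01 * a / K * g ω + s / K * h ω = P' ω := by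
    intro ω
    rw [hg, hh, hP', Finset.mul_sum, Finset.mul_sum, ← Finset.sum_add_distrib]
    refine Finset.sum_congr rfl fun k _ => ?_
    rw [hμ, hlam, hs']
    field_simp
    ring
  have hcomp : (fun ω => (P ω, P' ω)) = (⇑e) ∘ (fun ω => (g ω, h ω)) := by
    funext ω
    rw [Function.comp_apply, hecoe, hTapp, hgP, hhP]
  -- rewrite the map
  rw [hcomp, ← Measure.map_map e.measurable hghmeas, hdens]
  have hfmeas : Measurable fun q : ℝ × ℝ => ENNReal.ofReal (Dh (e.symm q)) :=
    (hDhmeas.comp e.symm.measurable).ennreal_ofReal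
  have hrw : (fun p : ℝ × ℝ => ENNReal.ofReal (Dh p)) =
      fun p => (fun q => ENNReal.ofReal (Dh (e.symm q))) (e p) := by
    funext p; simp
  rw [hrw, map_withDensity_equiv e volume _ hfmeas]
  have hmapvol : Measure.map (⇑e) volume =
      (ENNReal.ofReal |(LinearMap.det T)⁻¹|) • (volume : Measure (ℝ × ℝ)) := by
    rw [hecoe]
    exact Measure.map_linearMap_addHaar_eq_smul_addHaar volume hdetpos.ne'
  rw [hmapvol, withDensity_smul_measure, ← withDensity_smul' _ _ ENNReal.ofReal_ne_top]
  congr 1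
  funext p
  have hconst : (K * K11 - K01 ^ 2) ^ (-(1 : ℝ) / 2) = |(LinearMap.det T)⁻¹| := by
    rw [hdet, abs_of_nonneg (inv_nonneg.mpr (Real.sqrt_nonneg _)),
      show (-(1 : ℝ) / 2) = -(1 / 2) by norm_num, Real.rpow_neg hpos.le,
      Real.sqrt_eq_rpow]
  have hSp : e.symm p = (p.1 / a, (K * p.2 - K01 * p.1) / s) := by
    rw [hesymm, hSapp]
    apply Prod.ext
    · rfl
    · simp only []
      field_simp
      ring
  rw [Pi.smul_apply, smul_eq_mul, hSp, ← ENNReal.ofReal_mul (abs_nonneg _), hconst]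
end

section
/- Let a > 0, q ≥ 1, and let φ : ℝ → ℂ satisfy |φ(s)| ≤ (1 + a s²)^{−q} for all s ∈ ℝ. Let ω_0, ..., ω_n ∈ ℝ and set r² = Σ_{k=0}^n ω_k². Suppose M_1, ..., M_T (with T ≥ 1) is a partition of the index set {0, 1, ..., n} such that Σ_{k ∈ M_j} ω_k² ≥ r²/T for every j = 1, ..., T. Then ∏_{k=0}^n |φ(ω_k)| ≤ (1 + (a/T) r²)^{−Tq}. -/
open Finset

lemma aux_one_add_sum_le_prod {ι : Type*} (s : Finset ι) (f : ι → ℝ)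
    (hf : ∀ i ∈ s, 0 ≤ f i) : 1 + ∑ i ∈ s, f i ≤ ∏ i ∈ s, (1 + f i) := by
  induction s using Finset.cons_induction with
  | empty => simp
  | cons a s ha ih =>
    rw [Finset.sum_cons, Finset.prod_cons]
    have h1 : 0 ≤ f a := hf a (Finset.mem_cons_self a s)
    have h2 : ∀ i ∈ s, 0 ≤ f i := fun i hi => hf i (Finset.mem_cons_of_mem hi)
    have hsum : 0 ≤ ∑ i ∈ s, f i := Finset.sum_nonneg h2
    calc 1 + (f a + ∑ i ∈ s, f i) ≤ (1 + f a) * (1 + ∑ i ∈ s, f i) := by nlinarith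
    _ ≤ (1 + f a) * ∏ i ∈ s, (1 + f i) := by
        exact mul_le_mul_of_nonneg_left (ih h2) (by linarith)

theorem stmt_5 (a q : ℝ) (ha : 0 < a) (hq : 1 ≤ q)
    (φ : ℝ → ℂ)
    (hφ : ∀ s : ℝ, ‖φ s‖ ≤ (1 + a * s ^ 2) ^ (-q))
    (n : ℕ) (ω : ℕ → ℝ) (r : ℝ)
    (hr : r ^ 2 = ∑ k ∈ Finset.range (n + 1), ω k ^ 2)
    (T : ℕ) (hT : 1 ≤ T) (M : Fin T → Finset ℕ)
    (hdisj : ∀ i j, i ≠ j → Disjoint (M i) (M j))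
    (hcover : (Finset.univ : Finset (Fin T)).biUnion M = Finset.range (n + 1))
    (hlow : ∀ j, (r ^ 2) / T ≤ ∑ k ∈ M j, ω k ^ 2) :
    (∏ k ∈ Finset.range (n + 1), ‖φ (ω k)‖) ≤
      (1 + (a / T) * r ^ 2) ^ (-(T * q)) := by
  have hT0 : (0:ℝ) < T := by exact_mod_cast hT
  have hr2 : 0 ≤ r ^ 2 := by rw [hr]; positivity
  have hbase : (0:ℝ) < 1 + (a / T) * r ^ 2 := by positivity
  -- rewrite product over partition
  rw [← hcover, Finset.prod_biUnion (fun i _ j _ hij => hdisj i j hij)]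
  have key : ∀ j : Fin T, ∏ k ∈ M j, ‖φ (ω k)‖
      ≤ (1 + (a / T) * r ^ 2) ^ (-q) := by
    intro j
    have hpos : ∀ k ∈ M j, (0:ℝ) < 1 + a * ω k ^ 2 := fun k _ => by positivity
    have step1 : ∏ k ∈ M j, ‖φ (ω k)‖
        ≤ ∏ k ∈ M j, (1 + a * ω k ^ 2) ^ (-q) :=
      Finset.prod_le_prod (fun k _ => norm_nonneg _) (fun k _ => hφ (ω k))
    have step2 : (∏ k ∈ M j, (1 + a * ω k ^ 2) ^ (-q))
        = (∏ k ∈ M j, (1 + a * ω k ^ 2)) ^ (-q) :=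
      Real.finset_prod_rpow _ _ (fun k hk => (hpos k hk).le) _
    have step3 : 1 + (a / T) * r ^ 2 ≤ ∏ k ∈ M j, (1 + a * ω k ^ 2) := by
      have h1 : 1 + ∑ k ∈ M j, a * ω k ^ 2 ≤ ∏ k ∈ M j, (1 + a * ω k ^ 2) :=
        aux_one_add_sum_le_prod _ _ (fun k _ => by positivity)
      have h2 : (a / T) * r ^ 2 ≤ ∑ k ∈ M j, a * ω k ^ 2 := by
        rw [← Finset.mul_sum]
        have := hlow j
        calc (a / T) * r ^ 2 = a * (r ^ 2 / T) := by ring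
        _ ≤ a * ∑ k ∈ M j, ω k ^ 2 := mul_le_mul_of_nonneg_left this ha.le
      linarith
    calc ∏ k ∈ M j, ‖φ (ω k)‖
        ≤ (∏ k ∈ M j, (1 + a * ω k ^ 2)) ^ (-q) := step2 ▸ step1
      _ ≤ (1 + (a / T) * r ^ 2) ^ (-q) :=
        Real.rpow_le_rpow_of_nonpos hbase step3 (by linarith)
  calc ∏ j : Fin T, ∏ k ∈ M j, ‖φ (ω k)‖
      ≤ ∏ j : Fin T, (1 + (a / T) * r ^ 2) ^ (-q) :=
        Finset.prod_le_prod (fun j _ => Finset.prod_nonneg fun k _ => norm_nonneg _)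
          (fun j _ => key j)
    _ = (1 + (a / T) * r ^ 2) ^ (-(T * q)) := by
        rw [Finset.prod_const, Finset.card_univ, Fintype.card_fin,
          ← Real.rpow_natCast ((1 + (a / T) * r ^ 2) ^ (-q)) T,
          ← Real.rpow_mul hbase.le]
        ring_nf
end

section
/- Let φ : ℝ → ℂ be three times differentiable with |φ'(s)| ≤ C₂|s|, |φ''(s)| ≤ C₂, and |φ'''(s)| ≤ C₃ for all s ∈ ℝ, where C₂, C₃ > 0. Let λ_0, ..., λ_n ∈ ℝ with Σ_{k=0}^n λ_k² = 1, let ω_0, ..., ω_n ∈ ℝ with Σ_{k=0}^n ω_k² = r², and suppose B ≥ 0 is such that ∏_{l ≠ k} |φ(ω_l)| ≤ B for every k and ∏_{l ∉ {i,k}} |φ(ω_l)| ≤ B for every pair i ≠ k. Then | Σ_{k=0}^n λ_k³ φ'''(ω_k) ∏_{l ≠ k} φ(ω_l) + 2 Σ_{k=0}^n Σ_{i ≠ k} λ_i² λ_k φ''(ω_i) φ'(ω_k) ∏_{l ∉ {i,k}} φ(ω_l) | ≤ (C₃ + 2 C₂² r) · B. -/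
open Finset

theorem stmt_7 (C₂ C₃ : ℝ) (hC₂ : 0 < C₂) (hC₃ : 0 < C₃)
    (φ : ℝ → ℂ) (hdiff : Differentiable ℝ φ)
    (hdiff2 : Differentiable ℝ (deriv φ))
    (hdiff3 : Differentiable ℝ (deriv (deriv φ)))
    (hφ1 : ∀ s : ℝ, ‖deriv φ s‖ ≤ C₂ * |s|)
    (hφ2 : ∀ s : ℝ, ‖deriv (deriv φ) s‖ ≤ C₂)
    (hφ3 : ∀ s : ℝ, ‖deriv (deriv (deriv φ)) s‖ ≤ C₃)
    (n : ℕ) (lam ω : ℕ → ℝ)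
    (hlam : ∑ k ∈ Finset.range (n + 1), lam k ^ 2 = 1)
    (r : ℝ) (hr : 0 ≤ r)
    (hω : ∑ k ∈ Finset.range (n + 1), ω k ^ 2 = r ^ 2)
    (B : ℝ) (hB : 0 ≤ B)
    (hprod1 : ∀ k ∈ Finset.range (n + 1),
      (∏ l ∈ (Finset.range (n + 1)).erase k, ‖φ (ω l)‖) ≤ B)
    (hprod2 : ∀ k ∈ Finset.range (n + 1), ∀ i ∈ Finset.range (n + 1), i ≠ k →
      (∏ l ∈ ((Finset.range (n + 1)).erase k).erase i, ‖φ (ω l)‖) ≤ B) :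
    ‖
      (∑ k ∈ Finset.range (n + 1), (lam k : ℂ) ^ 3 * deriv (deriv (deriv φ)) (ω k) *
          ∏ l ∈ (Finset.range (n + 1)).erase k, φ (ω l)) +
      2 * ∑ k ∈ Finset.range (n + 1), ∑ i ∈ (Finset.range (n + 1)).erase k,
          ((lam i : ℂ) ^ 2 * lam k) * deriv (deriv φ) (ω i) * deriv φ (ω k) *
            ∏ l ∈ ((Finset.range (n + 1)).erase k).erase i, φ (ω l)‖ ≤
      (C₃ + 2 * C₂ ^ 2 * r) * B := by
  set S := Finset.range (n + 1) with hS
  have hlam1 : ∀ k ∈ S, |lam k| ≤ 1 := by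
    intro k hk
    have h1 : lam k ^ 2 ≤ 1 := by
      rw [← hlam]; exact Finset.single_le_sum (f := fun i => lam i ^ 2) (fun i _ => sq_nonneg _) hk
    nlinarith [abs_nonneg (lam k), sq_abs (lam k)]
  -- Cauchy-Schwarz
  have hCS : ∑ k ∈ S, |lam k| * |ω k| ≤ r := by
    have h := sum_mul_sq_le_sq_mul_sq S (fun k => |lam k|) (fun k => |ω k|)
    simp only [sq_abs] at h
    rw [hlam, hω, one_mul] at h
    have hnn : 0 ≤ ∑ k ∈ S, |lam k| * |ω k| :=
      Finset.sum_nonneg fun k _ => mul_nonneg (abs_nonneg _) (abs_nonneg _)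
    nlinarith
  have hb1 : ‖∑ k ∈ S, (lam k : ℂ) ^ 3 * deriv (deriv (deriv φ)) (ω k) *
      ∏ l ∈ S.erase k, φ (ω l)‖ ≤ C₃ * B := by
    calc ‖∑ k ∈ S, (lam k : ℂ) ^ 3 * deriv (deriv (deriv φ)) (ω k) *
          ∏ l ∈ S.erase k, φ (ω l)‖
        ≤ ∑ k ∈ S, ‖(lam k : ℂ) ^ 3 * deriv (deriv (deriv φ)) (ω k) *
          ∏ l ∈ S.erase k, φ (ω l)‖ := norm_sum_le _ _
      _ ≤ ∑ k ∈ S, lam k ^ 2 * (C₃ * B) := by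
          apply Finset.sum_le_sum
          intro k hk
          rw [norm_mul, norm_mul, norm_pow, Complex.norm_real, Real.norm_eq_abs, norm_prod]
          have h1 : |lam k| ^ 3 ≤ lam k ^ 2 := by
            have := hlam1 k hk
            nlinarith [abs_nonneg (lam k), sq_abs (lam k)]
          have h2 : ‖deriv (deriv (deriv φ)) (ω k)‖ *
              ∏ l ∈ S.erase k, ‖φ (ω l)‖ ≤ C₃ * B := by
            apply mul_le_mul (hφ3 _) (hprod1 k hk)
              (Finset.prod_nonneg fun l _ => norm_nonneg _) hC₃.le
          rw [mul_assoc]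
          exact mul_le_mul h1 h2 (mul_nonneg (norm_nonneg _)
            (Finset.prod_nonneg fun l _ => norm_nonneg _)) (sq_nonneg _)
      _ = C₃ * B := by rw [← Finset.sum_mul, hlam, one_mul]
  have hb2 : ‖∑ k ∈ S, ∑ i ∈ S.erase k,
      ((lam i : ℂ) ^ 2 * lam k) * deriv (deriv φ) (ω i) * deriv φ (ω k) *
        ∏ l ∈ (S.erase k).erase i, φ (ω l)‖ ≤ C₂ ^ 2 * r * B := by
    calc ‖∑ k ∈ S, ∑ i ∈ S.erase k,
          ((lam i : ℂ) ^ 2 * lam k) * deriv (deriv φ) (ω i) * deriv φ (ω k) *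
            ∏ l ∈ (S.erase k).erase i, φ (ω l)‖
        ≤ ∑ k ∈ S, ‖∑ i ∈ S.erase k,
          ((lam i : ℂ) ^ 2 * lam k) * deriv (deriv φ) (ω i) * deriv φ (ω k) *
            ∏ l ∈ (S.erase k).erase i, φ (ω l)‖ := norm_sum_le _ _
      _ ≤ ∑ k ∈ S, |lam k| * |ω k| * (C₂ ^ 2 * B) := by
          apply Finset.sum_le_sum
          intro k hk
          calc ‖∑ i ∈ S.erase k,
                ((lam i : ℂ) ^ 2 * lam k) * deriv (deriv φ) (ω i) * deriv φ (ω k) *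
                  ∏ l ∈ (S.erase k).erase i, φ (ω l)‖
              ≤ ∑ i ∈ S.erase k, ‖
                ((lam i : ℂ) ^ 2 * lam k) * deriv (deriv φ) (ω i) * deriv φ (ω k) *
                  ∏ l ∈ (S.erase k).erase i, φ (ω l)‖ := norm_sum_le _ _
            _ ≤ ∑ i ∈ S.erase k, lam i ^ 2 * (|lam k| * |ω k| * (C₂ ^ 2 * B)) := by
                apply Finset.sum_le_sum
                intro i hi
                have hiS : i ∈ S := Finset.mem_of_mem_erase hi
                have hik : i ≠ k := Finset.ne_of_mem_erase hi
                rw [norm_mul, norm_mul, norm_mul, norm_mul, norm_pow, Complex.norm_real, Real.norm_eq_abs,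
                  Complex.norm_real, Real.norm_eq_abs, norm_prod, sq_abs]
                have h2 : ‖deriv (deriv φ) (ω i)‖ *
                    (‖deriv φ (ω k)‖ *
                    ∏ l ∈ (S.erase k).erase i, ‖φ (ω l)‖) ≤
                    C₂ * (C₂ * |ω k| * B) := by
                  apply mul_le_mul (hφ2 _) _ (mul_nonneg (norm_nonneg _)
                    (Finset.prod_nonneg fun l _ => norm_nonneg _)) hC₂.le
                  exact mul_le_mul (hφ1 _) (hprod2 k hk i hiS hik)
                    (Finset.prod_nonneg fun l _ => norm_nonneg _)
                    (mul_nonneg hC₂.le (abs_nonneg _))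
                have h3 : lam i ^ 2 * |lam k| *
                    (‖deriv (deriv φ) (ω i)‖ *
                    (‖deriv φ (ω k)‖ *
                    ∏ l ∈ (S.erase k).erase i, ‖φ (ω l)‖)) ≤
                    lam i ^ 2 * |lam k| * (C₂ * (C₂ * |ω k| * B)) := by
                  apply mul_le_mul_of_nonneg_left h2
                    (mul_nonneg (sq_nonneg _) (abs_nonneg _))
                calc lam i ^ 2 * |lam k| * ‖deriv (deriv φ) (ω i)‖ *
                      ‖deriv φ (ω k)‖ *
                      ∏ l ∈ (S.erase k).erase i, ‖φ (ω l)‖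
                    = lam i ^ 2 * |lam k| *
                      (‖deriv (deriv φ) (ω i)‖ *
                      (‖deriv φ (ω k)‖ *
                      ∏ l ∈ (S.erase k).erase i, ‖φ (ω l)‖)) := by ring
                  _ ≤ lam i ^ 2 * |lam k| * (C₂ * (C₂ * |ω k| * B)) := h3
                  _ = lam i ^ 2 * (|lam k| * |ω k| * (C₂ ^ 2 * B)) := by ring
            _ = (∑ i ∈ S.erase k, lam i ^ 2) * (|lam k| * |ω k| * (C₂ ^ 2 * B)) := by
                rw [← Finset.sum_mul]
            _ ≤ 1 * (|lam k| * |ω k| * (C₂ ^ 2 * B)) := by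
                apply mul_le_mul_of_nonneg_right _
                  (mul_nonneg (mul_nonneg (abs_nonneg _) (abs_nonneg _))
                    (mul_nonneg (sq_nonneg _) hB))
                rw [← hlam]
                exact Finset.sum_le_sum_of_subset_of_nonneg (Finset.erase_subset _ _)
                  (fun i _ _ => sq_nonneg _)
            _ = |lam k| * |ω k| * (C₂ ^ 2 * B) := one_mul _
      _ = (∑ k ∈ S, |lam k| * |ω k|) * (C₂ ^ 2 * B) := by rw [← Finset.sum_mul]
      _ ≤ r * (C₂ ^ 2 * B) := by
          apply mul_le_mul_of_nonneg_right hCS (mul_nonneg (sq_nonneg _) hB)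
      _ = C₂ ^ 2 * r * B := by ring
  calc ‖(∑ k ∈ S, (lam k : ℂ) ^ 3 * deriv (deriv (deriv φ)) (ω k) *
          ∏ l ∈ S.erase k, φ (ω l)) +
        2 * ∑ k ∈ S, ∑ i ∈ S.erase k,
          ((lam i : ℂ) ^ 2 * lam k) * deriv (deriv φ) (ω i) * deriv φ (ω k) *
            ∏ l ∈ (S.erase k).erase i, φ (ω l)‖
      ≤ ‖∑ k ∈ S, (lam k : ℂ) ^ 3 * deriv (deriv (deriv φ)) (ω k) *
          ∏ l ∈ S.erase k, φ (ω l)‖ +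
        ‖2 * ∑ k ∈ S, ∑ i ∈ S.erase k,
          ((lam i : ℂ) ^ 2 * lam k) * deriv (deriv φ) (ω i) * deriv φ (ω k) *
            ∏ l ∈ (S.erase k).erase i, φ (ω l)‖ := norm_add_le _ _
    _ ≤ C₃ * B + 2 * (C₂ ^ 2 * r * B) := by
        rw [norm_mul]
        have : ‖(2:ℂ)‖ = 2 := Complex.norm_two
        rw [this]
        exact add_le_add hb1 (by linarith [hb2])
    _ = (C₃ + 2 * C₂ ^ 2 * r) * B := by ring
end

section
/- The function x ↦ x^{3/2} Γ(x − 3/2)/Γ(x) is decreasing (antitone) on the interval [2, ∞), and its value at x = 2 is 2√(2π). In particular, x^{3/2} Γ(x − 3/2)/Γ(x) ≤ 2√(2π) for all x ≥ 2. -/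
open Real Filter Finset

noncomputable def Hfun (m : ℕ) (t : ℝ) : ℝ :=
  5/2 * Real.log (t + m) - Real.log (t - 3/2 + m) - 3/2 * Real.log (t + 1 + m)

lemma Hfun_hasDerivAt (m : ℕ) {t : ℝ} (ht : 2 ≤ t) :
    HasDerivAt (Hfun m)
      (5/2 * (1 / (t + m)) - 1 / (t - 3/2 + m) - 3/2 * (1 / (t + 1 + m))) t := by
  have hm : (0:ℝ) ≤ m := Nat.cast_nonneg m
  have h1 : (0:ℝ) < t + m := by linarith
  have h2 : (0:ℝ) < t - 3/2 + m := by linarith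
  have h3 : (0:ℝ) < t + 1 + m := by linarith
  have d1 : HasDerivAt (fun t : ℝ => Real.log (t + m)) (1 / (t + m)) t := by
    simpa using (((hasDerivAt_id t).add_const (m:ℝ)).log h1.ne')
  have d2 : HasDerivAt (fun t : ℝ => Real.log (t - 3/2 + m)) (1 / (t - 3/2 + m)) t := by
    simpa using ((((hasDerivAt_id t).sub_const (3/2)).add_const (m:ℝ)).log h2.ne')
  have d3 : HasDerivAt (fun t : ℝ => Real.log (t + 1 + m)) (1 / (t + 1 + m)) t := by
    simpa using ((((hasDerivAt_id t).add_const (1:ℝ)).add_const (m:ℝ)).log h3.ne')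
  exact ((d1.const_mul (5/2)).sub d2).sub (d3.const_mul (3/2))

lemma aux_ineq {a : ℝ} (ha : 2 ≤ a) :
    5/2 * (1/a) - 1/(a - 3/2) - 3/2 * (1/(a+1)) ≤ 0 := by
  have h1 : (0:ℝ) < a := by linarith
  have h2 : (0:ℝ) < a - 3/2 := by linarith
  have h3 : (0:ℝ) < a + 1 := by linarith
  have key : 5/2 * (1/a) - 1/(a - 3/2) - 3/2 * (1/(a+1))
      = (-(15/4)) / (a * (a - 3/2) * (a+1)) := by
    have e : (-3 + a * 2) ≠ 0 := ne_of_gt (by linarith)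
    have e' : (a * 2 - 3) ≠ 0 := ne_of_gt (by linarith)
    rw [eq_div_iff (by positivity : (a * (a - 3/2) * (a+1)) ≠ 0)]
    field_simp [h1.ne', h2.ne', h3.ne', e, e', (ne_of_gt (by linarith) : (2 * a - 3) ≠ 0)]
    ring
  rw [key]
  apply div_nonpos_of_nonpos_of_nonneg (by norm_num)
  positivity

lemma Hfun_anti (m : ℕ) : AntitoneOn (Hfun m) (Set.Ici (2:ℝ)) := by
  refine antitoneOn_of_deriv_nonpos (convex_Ici 2)
    (fun t ht => (Hfun_hasDerivAt m ht).continuousAt.continuousWithinAt)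
    (fun t ht => ((Hfun_hasDerivAt m (le_of_lt (by rwa [interior_Ici] at ht))).differentiableAt).differentiableWithinAt)
    ?_
  intro t ht
  rw [interior_Ici] at ht
  have ht' : (2:ℝ) ≤ t := le_of_lt ht
  rw [(Hfun_hasDerivAt m ht').deriv]
  have hm : (0:ℝ) ≤ m := Nat.cast_nonneg m
  rw [show t - 3/2 + ↑m = (t + ↑m) - 3/2 by ring, show t + 1 + ↑m = (t + ↑m) + 1 by ring]
  exact aux_ineq (by linarith : 2 ≤ t + ↑m)

lemma sum_Hfun_eq (t : ℝ) (n : ℕ) :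
    ∑ m ∈ Finset.range (n+1), Hfun m t =
      (Real.BohrMollerup.logGammaSeq (t - 3/2) n - Real.BohrMollerup.logGammaSeq t n)
        + 3/2 * Real.log t + 3/2 * (Real.log n - Real.log (t + n + 1)) := by
  have e1 : ∑ m ∈ Finset.range (n+1), Hfun m t
      = (∑ m ∈ Finset.range (n+1), (Real.log (t + m) - Real.log (t - 3/2 + m)))
        + 3/2 * (Real.log (t + ((0:ℕ):ℝ)) - Real.log (t + ((n+1:ℕ):ℝ))) := by
    rw [← Finset.sum_range_sub' (fun m : ℕ => Real.log (t + (m:ℝ))) (n+1),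
      Finset.mul_sum, ← Finset.sum_add_distrib]
    refine Finset.sum_congr rfl fun m _ => ?_
    unfold Hfun
    push_cast
    ring_nf
  rw [e1]
  simp only [Real.BohrMollerup.logGammaSeq, Finset.sum_sub_distrib]
  push_cast
  ring_nf

lemma tendsto_sum_Hfun {t : ℝ} (ht : 2 ≤ t) :
    Filter.Tendsto (fun n : ℕ => ∑ m ∈ Finset.range (n+1), Hfun m t) Filter.atTop
      (nhds (Real.log (Real.Gamma (t - 3/2)) - Real.log (Real.Gamma t)
        + 3/2 * Real.log t)) := by
  have h1 : (0:ℝ) < t - 3/2 := by linarith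
  have h2 : (0:ℝ) < t := by linarith
  have l1 := Real.BohrMollerup.tendsto_log_gamma h1
  have l2 := Real.BohrMollerup.tendsto_log_gamma h2
  have l3 : Filter.Tendsto (fun n : ℕ => Real.log n - Real.log (t + n + 1))
      Filter.atTop (nhds 0) := by
    have h5 : Filter.Tendsto (fun n : ℕ => (t+1)/(n:ℝ) + 1) Filter.atTop (nhds 1) := by
      simpa using (tendsto_const_div_atTop_nhds_zero_nat (t+1)).add_const 1
    have h6 : Filter.Tendsto (fun n : ℕ => Real.log ((t+1)/(n:ℝ) + 1))
        Filter.atTop (nhds 0) := by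
      have := (Real.continuousAt_log one_ne_zero).tendsto.comp h5
      simpa [Function.comp_def] using this
    have h7 := h6.neg
    rw [neg_zero] at h7
    refine h7.congr' ?_
    filter_upwards [Filter.eventually_ge_atTop 1] with n hn
    have hn' : (0:ℝ) < n := by exact_mod_cast hn
    have harg : (t+1)/(n:ℝ) + 1 = (t + n + 1)/n := by field_simp; ring
    rw [harg, Real.log_div (by positivity) hn'.ne']
    ring
  have l4 := ((l1.sub l2).add (tendsto_const_nhds (x := 3/2 * Real.log t))).add
    (l3.const_mul (3/2))
  rw [mul_zero, add_zero] at l4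
  exact l4.congr fun n => (sum_Hfun_eq t n).symm

lemma exp_form {t : ℝ} (ht : 2 ≤ t) :
    t ^ ((3:ℝ)/2) * Real.Gamma (t - 3/2) / Real.Gamma t
      = Real.exp (Real.log (Real.Gamma (t - 3/2)) - Real.log (Real.Gamma t)
          + 3/2 * Real.log t) := by
  have h0 : (0:ℝ) < t := by linarith
  have hg1 : 0 < Real.Gamma (t - 3/2) := Real.Gamma_pos_of_pos (by linarith)
  have hg2 : 0 < Real.Gamma t := Real.Gamma_pos_of_pos h0
  rw [Real.exp_add, Real.exp_sub, Real.exp_log hg1, Real.exp_log hg2,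
    Real.rpow_def_of_pos h0, mul_comm (Real.log t) ((3:ℝ)/2)]
  ring

theorem stmt_12 :
    AntitoneOn (fun x : ℝ => x ^ ((3 : ℝ) / 2) * Real.Gamma (x - 3 / 2) / Real.Gamma x)
      (Set.Ici (2 : ℝ)) ∧
    (2 : ℝ) ^ ((3 : ℝ) / 2) * Real.Gamma (2 - 3 / 2) / Real.Gamma 2 =
      2 * Real.sqrt (2 * π) ∧
    ∀ x : ℝ, 2 ≤ x →
      x ^ ((3 : ℝ) / 2) * Real.Gamma (x - 3 / 2) / Real.Gamma x ≤
        2 * Real.sqrt (2 * π) := by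
  have hanti : AntitoneOn (fun x : ℝ => x ^ ((3 : ℝ) / 2) * Real.Gamma (x - 3 / 2) / Real.Gamma x)
      (Set.Ici (2 : ℝ)) := by
    intro x hx y hy hxy
    simp only [Set.mem_Ici] at hx hy
    simp only
    rw [exp_form hx, exp_form hy, Real.exp_le_exp]
    refine le_of_tendsto_of_tendsto' (tendsto_sum_Hfun hy) (tendsto_sum_Hfun hx) fun n => ?_
    exact Finset.sum_le_sum fun m _ => Hfun_anti m (Set.mem_Ici.mpr hx) (Set.mem_Ici.mpr hy) hxy
  have hval : (2 : ℝ) ^ ((3 : ℝ) / 2) * Real.Gamma (2 - 3 / 2) / Real.Gamma 2 =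
      2 * Real.sqrt (2 * π) := by
    rw [show (2:ℝ) - 3/2 = 1/2 by norm_num, Real.Gamma_one_half_eq, Real.Gamma_two,
      Real.sqrt_mul (by norm_num : (0:ℝ) ≤ 2) π,
      show ((3:ℝ)/2) = 1 + 1/2 by norm_num, Real.rpow_add two_pos, Real.rpow_one,
      ← Real.sqrt_eq_rpow]
    ring
  refine ⟨hanti, hval, fun x hx => ?_⟩
  calc x ^ ((3:ℝ)/2) * Real.Gamma (x - 3/2) / Real.Gamma x
      ≤ (2:ℝ) ^ ((3:ℝ)/2) * Real.Gamma (2 - 3/2) / Real.Gamma 2 :=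
        hanti (Set.self_mem_Ici) (Set.mem_Ici.mpr hx) hx
    _ = 2 * Real.sqrt (2 * π) := hval
end

section
/- For k = 0, 1, 2, ..., let p_k(x) = √((k+1)/π) x^k, and for n ∈ ℕ and x ∈ ℝ define K_n(x) = Σ_{k=0}^n p_k(x)², K01_n(x) = Σ_{k=0}^n p_k(x) p_k'(x), K11_n(x) = Σ_{k=0}^n p_k'(x)², and 𝒦_n(x) = √(K11_n(x) K_n(x) − K01_n(x)²) / K_n(x). Then for every x ∈ ℝ with |x| < 1, the limit as n → ∞ of 𝒦_n(x) equals √2/(1 − x²). -/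
open Finset Real Filter

noncomputable def bergPoly (k : ℕ) (x : ℝ) : ℝ :=
  Real.sqrt ((k + 1) / π) * x ^ k

noncomputable def bergK (n : ℕ) (x : ℝ) : ℝ :=
  ∑ k ∈ Finset.range (n + 1), (bergPoly k x) ^ 2

noncomputable def bergK01 (n : ℕ) (x : ℝ) : ℝ :=
  ∑ k ∈ Finset.range (n + 1), bergPoly k x * deriv (bergPoly k) x

noncomputable def bergK11 (n : ℕ) (x : ℝ) : ℝ :=
  ∑ k ∈ Finset.range (n + 1), (deriv (bergPoly k) x) ^ 2

noncomputable def bergKcal (n : ℕ) (x : ℝ) : ℝ :=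
  Real.sqrt (bergK11 n x * bergK n x - (bergK01 n x) ^ 2) / bergK n x

lemma deriv_bergPoly (k : ℕ) (x : ℝ) :
    deriv (bergPoly k) x = Real.sqrt ((k + 1) / π) * (k * x ^ (k - 1)) := by
  have h : bergPoly k = fun y : ℝ => Real.sqrt ((k + 1) / π) * y ^ k := rfl
  rw [h, deriv_const_mul_field, deriv_pow_field]

lemma sq_coef (k : ℕ) : (Real.sqrt ((k + 1) / π)) ^ 2 = (k + 1) / π :=
  Real.sq_sqrt (div_nonneg (by positivity) Real.pi_pos.le)

lemma hS (k : ℕ) {t : ℝ} (ht : |t| < 1) :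
    HasSum (fun n : ℕ => ((n + k).descFactorial k : ℝ) * t ^ n)
      ((k.factorial : ℝ) / (1 - t) ^ (k + 1)) := by
  have h := (hasSum_choose_mul_geometric_of_norm_lt_one k (r := t)
    (by rwa [Real.norm_eq_abs])).mul_left (k.factorial : ℝ)
  have e : (fun n : ℕ => (k.factorial : ℝ) * (((n + k).choose k : ℝ) * t ^ n)) =
      fun n : ℕ => ((n + k).descFactorial k : ℝ) * t ^ n := by
    funext n
    rw [Nat.descFactorial_eq_factorial_mul_choose]
    push_cast
    ring
  rw [e] at h
  simpa [mul_one_div, div_eq_mul_inv] using h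

theorem stmt_17 (x : ℝ) (hx : |x| < 1) :
    Tendsto (fun n : ℕ => bergKcal n x) atTop (nhds (Real.sqrt 2 / (1 - x ^ 2))) := by
  have hπ : (0:ℝ) < π := Real.pi_pos
  have hπne : π ≠ 0 := ne_of_gt hπ
  set t : ℝ := x ^ 2 with htdef
  have ht0 : 0 ≤ t := sq_nonneg x
  have ht1 : t < 1 := by nlinarith [abs_nonneg x, sq_abs x]
  have htabs : |t| < 1 := by rw [abs_of_nonneg ht0]; exact ht1
  have hu : (0:ℝ) < 1 - t := by linarith
  have hune : (1:ℝ) - t ≠ 0 := ne_of_gt hu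
  set A : ℝ := 1 / (π * (1 - t) ^ 2) with hAdef
  set Bv : ℝ := 2 * x / (π * (1 - t) ^ 3) with hBdef
  set Cv : ℝ := (2 + 4 * t) / (π * (1 - t) ^ 4) with hCdef
  have hApos : 0 < A := one_div_pos.mpr (mul_pos hπ (pow_pos hu 2))
  have hAne : A ≠ 0 := ne_of_gt hApos
  -- limit of bergK
  have hA : Tendsto (fun n : ℕ => bergK n x) atTop (nhds A) := by
    have h := (((hS 1 htabs).mul_left (1/π)).tendsto_sum_nat).comp (tendsto_add_atTop_nat 1)
    have e2 : (1/π) * ((Nat.factorial 1 : ℝ) / (1 - t) ^ (1 + 1)) = A := by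
      rw [hAdef]; norm_num [Nat.factorial]; ring
    rw [e2] at h
    refine h.congr fun n => ?_
    rw [Function.comp_apply, bergK]
    refine Finset.sum_congr rfl fun k _ => ?_
    have hpow : (x ^ k) ^ 2 = t ^ k := by
      rw [htdef, ← pow_mul, ← pow_mul, mul_comm]
    rw [bergPoly, mul_pow, sq_coef, hpow]
    simp [Nat.descFactorial]
    ring
  -- limit of bergK01
  have hB : Tendsto (fun n : ℕ => bergK01 n x) atTop (nhds Bv) := by
    have h1 := (hS 2 htabs).mul_left (x/π)
    have e : (fun j : ℕ => (x/π) * (((j + 2).descFactorial 2 : ℝ) * t ^ j)) =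
        fun j : ℕ => bergPoly (j+1) x * deriv (bergPoly (j+1)) x := by
      funext j
      rw [bergPoly, deriv_bergPoly]
      have : (x : ℝ) ^ (j+1) * x ^ (j + 1 - 1) = x * t ^ j := by
        rw [htdef]
        simp only [Nat.add_sub_cancel]
        rw [pow_succ, ← pow_mul]
        ring
      rw [show Real.sqrt ((↑(j+1) + 1)/π) * x ^ (j+1) *
            (Real.sqrt ((↑(j+1) + 1)/π) * (↑(j+1) * x ^ (j+1-1))) =
          (Real.sqrt ((↑(j+1) + 1)/π))^2 * (↑(j+1)) * (x ^ (j+1) * x ^ (j+1-1)) by ring,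
        sq_coef, this]
      simp [Nat.descFactorial]
      push_cast
      ring
    rw [e] at h1
    have h2 := (hasSum_nat_add_iff (f := fun k : ℕ => bergPoly k x * deriv (bergPoly k) x) 1).mp h1
    have hz : bergPoly 0 x * deriv (bergPoly 0) x = 0 := by
      rw [deriv_bergPoly]; simp
    rw [Finset.sum_range_one, hz, add_zero] at h2
    have h := (h2.tendsto_sum_nat).comp (tendsto_add_atTop_nat 1)
    have e2 : (x/π) * ((Nat.factorial 2 : ℝ) / (1 - t) ^ (2 + 1)) = Bv := by
      rw [hBdef, show ((Nat.factorial 2 : ℕ) : ℝ) = 2 by norm_num [Nat.factorial],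
        div_mul_div_comm]
      ring_nf
    rw [e2] at h
    refine h.congr fun n => ?_
    rw [Function.comp_apply, bergK01]
  -- limit of bergK11
  have hC : Tendsto (fun n : ℕ => bergK11 n x) atTop (nhds Cv) := by
    have h1 := (((hS 3 htabs).sub ((hS 2 htabs).mul_left 2)).mul_left (1/π))
    have e : (fun j : ℕ => (1/π) * (((j + 3).descFactorial 3 : ℝ) * t ^ j -
        2 * (((j + 2).descFactorial 2 : ℝ) * t ^ j))) =
        fun j : ℕ => (deriv (bergPoly (j+1)) x) ^ 2 := by
      funext j
      rw [deriv_bergPoly, mul_pow, mul_pow, sq_coef]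
      simp only [Nat.add_sub_cancel, Nat.descFactorial_succ, Nat.descFactorial_zero, mul_one]
      rw [htdef]
      push_cast
      ring
    rw [e] at h1
    have h2 := (hasSum_nat_add_iff (f := fun k : ℕ => (deriv (bergPoly k) x) ^ 2) 1).mp h1
    have hz : (deriv (bergPoly 0) x) ^ 2 = 0 := by
      rw [deriv_bergPoly]; simp
    rw [Finset.sum_range_one, hz, add_zero] at h2
    have h := (h2.tendsto_sum_nat).comp (tendsto_add_atTop_nat 1)
    have e2 : (1/π) * ((Nat.factorial 3 : ℝ) / (1 - t) ^ (3 + 1) -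
        2 * ((Nat.factorial 2 : ℝ) / (1 - t) ^ (2 + 1))) = Cv := by
      rw [hCdef, show ((Nat.factorial 3 : ℕ) : ℝ) = 6 by norm_num [Nat.factorial],
        show ((Nat.factorial 2 : ℕ) : ℝ) = 2 by norm_num [Nat.factorial]]
      field_simp
      ring
    rw [e2] at h
    refine h.congr fun n => ?_
    rw [Function.comp_apply, bergK11]
  -- combine
  have hmain : Tendsto (fun n : ℕ => bergKcal n x) atTop
      (nhds (Real.sqrt (Cv * A - Bv ^ 2) / A)) := by
    simp only [bergKcal]
    exact (((hC.mul hA).sub (hB.pow 2)).sqrt).div hA hAne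
  have hsq2 : Real.sqrt 2 ^ 2 = 2 := Real.sq_sqrt (by norm_num)
  have key : Cv * A - Bv ^ 2 = (Real.sqrt 2 / (π * (1 - t) ^ 3)) ^ 2 := by
    have hrhs : (Real.sqrt 2 / (π * (1 - t) ^ 3)) ^ 2 = 2 / (π * (1 - t) ^ 3) ^ 2 := by
      rw [div_pow, hsq2]
    rw [hrhs, hCdef, hAdef, hBdef]
    field_simp
    rw [htdef]
    ring
  have hsq : Real.sqrt (Cv * A - Bv ^ 2) = Real.sqrt 2 / (π * (1 - t) ^ 3) := by
    rw [key, Real.sqrt_sq (div_nonneg (Real.sqrt_nonneg 2) (mul_pos hπ (pow_pos hu 3)).le)]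
  have hfinal : Real.sqrt (Cv * A - Bv ^ 2) / A = Real.sqrt 2 / (1 - t) := by
    rw [hsq, hAdef]
    field_simp
  rwa [hfinal] at hmain
end
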